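/- arXiv:1804.02693 — 2 statements merged into one kernel-verified Lean document; each statement's English description precedes it below -/
import Mathlib

section
/- Suppose the finite potential game is tie-free, and let M denote the set of Nash equilibria (assumed a proper subset of 𝒜). Fix T > 0. Let m_min := min_{1≤i≤n} |A_i|, Z_max(T) := max over players i and profiles a_{−i} of Z_i(a_{−i}), and Γ_T^LLL := 1/(n·Z_max(T)). For a ∉ M let ξ^LLL(a) be the maximal length of a zero-cost LLL path from a to M and σ^ML(a) the minimal length of a zero-cost ML path from a to M, and let MPLR := max_{a∉M} ξ^LLL(a)/σ^ML(a). If m_min ≥ (1/n)·(1/Γ_T^LLL)^{MPLR}, then for every a ∉ M, every zero-cost LLL path ω from a to M, and every zero-cost ML path ω′ from a to M: ∏_{k=0}^{|ω|−1} P_T^LLL(ω_k, ω_{k+1}) ≥ (Γ_T^LLL)^{ξ^LLL(a)} ≥ (1/(n·m_min))^{σ^ML(a)} ≥ ∏_{k=0}^{|ω′|−1} P_T^ML(ω′_k, ω′_{k+1}). -/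
open Finset Real Filter Topology

variable {n : ℕ} {A : Fin n → Type*}

section Defs
variable [∀ i, Fintype (A i)] [∀ i, DecidableEq (A i)] [∀ i, Nonempty (A i)]
set_option linter.unusedSectionVars false

/-- `a` and `b` differ in exactly coordinate `i`. -/
def Neighbor (a b : ∀ i, A i) (i : Fin n) : Prop :=
  a i ≠ b i ∧ ∀ j, j ≠ i → a j = b j

instance (a b : ∀ i, A i) (i : Fin n) : Decidable (Neighbor a b i) :=
  inferInstanceAs (Decidable (_ ∧ _))

/-- `φ` is a potential function for the game with utilities `U`. -/
def IsPotential (U : Fin n → (∀ i, A i) → ℝ) (φ : (∀ i, A i) → ℝ) : Prop :=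
  ∀ (i : Fin n) (a : ∀ j, A j) (α α' : A i),
    U i (Function.update a i α) - U i (Function.update a i α')
      = φ (Function.update a i α) - φ (Function.update a i α')

/-- Best attainable utility of player `i` against `a₋ᵢ`. -/
noncomputable def bestVal (U : Fin n → (∀ i, A i) → ℝ) (i : Fin n) (a : ∀ j, A j) : ℝ :=
  Finset.univ.sup' Finset.univ_nonempty fun β : A i => U i (Function.update a i β)

open Classical in
/-- Best response set of player `i` against `a₋ᵢ`. -/
noncomputable def BR (U : Fin n → (∀ i, A i) → ℝ) (i : Fin n) (a : ∀ j, A j) : Finset (A i) :=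
  Finset.univ.filter fun β => U i (Function.update a i β) = bestVal U i a

/-- Metropolis learning transition cost. -/
noncomputable def VML (U : Fin n → (∀ i, A i) → ℝ) (a b : ∀ i, A i) : ℝ :=
  ∑ i, if a i ≠ b i then max (U i a - U i b) 0 else 0

/-- Log-linear learning transition cost. -/
noncomputable def VLLL (U : Fin n → (∀ i, A i) → ℝ) (a b : ∀ i, A i) : ℝ :=
  ∑ i, if a i ≠ b i then bestVal U i a - U i b else 0

noncomputable def PMLoff (U : Fin n → (∀ i, A i) → ℝ) (T : ℝ) (a b : ∀ i, A i) : ℝ :=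
  ∑ i, if Neighbor a b i then
    (1 / ((n : ℝ) * (Fintype.card (A i) : ℝ))) * Real.exp (-(max (U i a - U i b) 0) / T)
  else 0

/-- Metropolis learning transition matrix. -/
noncomputable def PML (U : Fin n → (∀ i, A i) → ℝ) (T : ℝ) (a b : ∀ i, A i) : ℝ :=
  if a = b then 1 - ∑ c, PMLoff U T a c else PMLoff U T a b

noncomputable def PLLLoff (U : Fin n → (∀ i, A i) → ℝ) (T : ℝ) (a b : ∀ i, A i) : ℝ :=
  ∑ i, if Neighbor a b i then
    (1 / (n : ℝ)) * Real.exp (U i b / T) / ∑ β : A i, Real.exp (U i (Function.update a i β) / T)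
  else 0

/-- Log-linear learning transition matrix. -/
noncomputable def PLLL (U : Fin n → (∀ i, A i) → ℝ) (T : ℝ) (a b : ∀ i, A i) : ℝ :=
  if a = b then 1 - ∑ c, PLLLoff U T a c else PLLLoff U T a b

/-- The normalizing constant `Z_i(a₋ᵢ)`. -/
noncomputable def Zi (U : Fin n → (∀ i, A i) → ℝ) (T : ℝ) (i : Fin n) (a : ∀ j, A j) : ℝ :=
  ∑ β : A i, Real.exp (-(bestVal U i a - U i (Function.update a i β)) / T)

/-- The Gibbs distribution. -/
noncomputable def gibbs (φ : (∀ i, A i) → ℝ) (T : ℝ) (a : ∀ i, A i) : ℝ :=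
  Real.exp (φ a / T) / ∑ b, Real.exp (φ b / T)

/-- Nash equilibrium. -/
def IsNash (U : Fin n → (∀ i, A i) → ℝ) (a : ∀ i, A i) : Prop :=
  ∀ (i : Fin n) (α : A i), U i (Function.update a i α) ≤ U i a

/-- No player is ever indifferent between two of its own actions. -/
def TieFree (U : Fin n → (∀ i, A i) → ℝ) : Prop :=
  ∀ (i : Fin n) (a : ∀ j, A j) (α α' : A i), α ≠ α' →
    U i (Function.update a i α) ≠ U i (Function.update a i α')

/-- `ω 0, ω 1, …, ω p` is a path: pairwise-distinct entries, consecutive entries neighbors. -/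
def IsPath (ω : ℕ → ∀ i, A i) (p : ℕ) : Prop :=
  (∀ k ≤ p, ∀ l ≤ p, ω k = ω l → k = l) ∧ ∀ k < p, ∃ i, Neighbor (ω k) (ω (k + 1)) i

/-- Zero-cost paths from `a` to the set `B` w.r.t. the cost `V`, encoded as (length, path). -/
def ZPaths (V : (∀ i, A i) → (∀ i, A i) → ℝ) (a : ∀ i, A i) (B : Set (∀ i, A i)) :
    Set (ℕ × (ℕ → ∀ i, A i)) :=
  {q | IsPath q.2 q.1 ∧ q.2 0 = a ∧ q.2 q.1 ∈ B ∧ ∀ k < q.1, V (q.2 k) (q.2 (k + 1)) = 0}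

/-- Minimal length of a zero-cost path from `a` to `B`. -/
noncomputable def minLen (V : (∀ i, A i) → (∀ i, A i) → ℝ) (a : ∀ i, A i)
    (B : Set (∀ i, A i)) : ℕ :=
  sInf {p | ∃ ω, (p, ω) ∈ ZPaths V a B}

/-- Maximal length of a zero-cost path from `a` to `B`. -/
noncomputable def maxLen (V : (∀ i, A i) → (∀ i, A i) → ℝ) (a : ∀ i, A i)
    (B : Set (∀ i, A i)) : ℕ :=
  sSup {p | ∃ ω, (p, ω) ∈ ZPaths V a B}

/-- Communication altitude w.r.t. the cost `V` and potential `φ`. -/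
noncomputable def Ac (V : (∀ i, A i) → (∀ i, A i) → ℝ) (φ : (∀ i, A i) → ℝ)
    (x y : ∀ i, A i) : ℝ :=
  sSup {v | ∃ (p : ℕ) (ω : ℕ → ∀ i, A i), 0 < p ∧ IsPath ω p ∧ ω 0 = x ∧ ω p = y ∧
    v = ⨅ k : Fin p, (φ (ω k) - V (ω k) (ω (k + 1)))}

/-- `max_i |A_i|`. -/
noncomputable def mMax (A : Fin n → Type*) [∀ i, Fintype (A i)] : ℕ :=
  ⨆ i : Fin n, Fintype.card (A i)

/-- `min_i |A_i|`. -/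
noncomputable def mMin (A : Fin n → Type*) [∀ i, Fintype (A i)] : ℕ :=
  ⨅ i : Fin n, Fintype.card (A i)

/-- `Z_max(T)`. -/
noncomputable def Zmax (U : Fin n → (∀ i, A i) → ℝ) (T : ℝ) : ℝ :=
  ⨆ i : Fin n, ⨆ a : ∀ j, A j, Zi U T i a

noncomputable def GammaML (A : Fin n → Type*) [∀ i, Fintype (A i)] : ℝ :=
  1 / ((n : ℝ) * (mMax A : ℝ))

noncomputable def GammaLLL (U : Fin n → (∀ i, A i) → ℝ) (T : ℝ) : ℝ :=
  1 / ((n : ℝ) * Zmax U T)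


lemma neighbor_ne {a b : ∀ i, A i} {i : Fin n} (h : Neighbor a b i) : a ≠ b :=
  fun he => h.1 (congrFun he i)

lemma neighbor_unique {a b : ∀ i, A i} {i j : Fin n} (hi : Neighbor a b i)
    (hj : Neighbor a b j) : j = i := by
  by_contra hne
  exact hi.1 (hj.2 i fun h => hne h.symm)

lemma one_le_Zi (U : Fin n → (∀ i, A i) → ℝ) {T : ℝ} (hT : 0 < T) (i : Fin n)
    (a : ∀ j, A j) : 1 ≤ Zi U T i a := by
  obtain ⟨β, -, hβ⟩ := Finset.exists_mem_eq_sup' Finset.univ_nonempty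
    (fun β : A i => U i (Function.update a i β))
  have h1 : Real.exp (-(bestVal U i a - U i (Function.update a i β)) / T) = 1 := by
    rw [bestVal, ← hβ]; simp
  calc (1:ℝ) = Real.exp (-(bestVal U i a - U i (Function.update a i β)) / T) := h1.symm
    _ ≤ Zi U T i a := by
      rw [Zi]
      exact Finset.single_le_sum
        (f := fun β : A i => Real.exp (-(bestVal U i a - U i (Function.update a i β)) / T))
        (fun b _ => (Real.exp_pos _).le) (Finset.mem_univ β)

lemma Zi_le_Zmax (U : Fin n → (∀ i, A i) → ℝ) (T : ℝ) (i : Fin n) (a : ∀ j, A j) :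
    Zi U T i a ≤ Zmax U T := by
  rw [Zmax]
  exact le_trans (le_ciSup (Finite.bddAbove_range _) a)
    (le_ciSup (f := fun i => ⨆ a : ∀ j, A j, Zi U T i a) (Finite.bddAbove_range _) i)

lemma one_le_Zmax (hn : 0 < n) (U : Fin n → (∀ i, A i) → ℝ) {T : ℝ} (hT : 0 < T) :
    1 ≤ Zmax U T := by
  have i : Fin n := ⟨0, hn⟩
  have a : ∀ j, A j := fun j => Classical.arbitrary (A j)
  exact le_trans (one_le_Zi U hT i a) (Zi_le_Zmax U T i a)

lemma one_le_mMin (hn : 0 < n) : 1 ≤ mMin A := by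
  have : Nonempty (Fin n) := ⟨⟨0, hn⟩⟩
  exact le_ciInf fun i => Fintype.card_pos

lemma mMin_le_card (i : Fin n) : mMin A ≤ Fintype.card (A i) :=
  ciInf_le (OrderBot.bddBelow _) i

lemma zpath_len_lt {V : (∀ i, A i) → (∀ i, A i) → ℝ} {a : ∀ i, A i} {B : Set (∀ i, A i)}
    {p : ℕ} {ω : ℕ → ∀ i, A i} (h : (p, ω) ∈ ZPaths V a B) :
    p < Fintype.card (∀ j, A j) := by
  have hinj : Function.Injective (fun k : Fin (p+1) => ω k) := by
    intro k l he
    exact Fin.ext (h.1.1 k (Nat.lt_succ_iff.mp k.isLt) l (Nat.lt_succ_iff.mp l.isLt) he)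
  have := Fintype.card_le_of_injective _ hinj
  simp only [Fintype.card_fin] at this
  omega

lemma zpath_len_pos {V : (∀ i, A i) → (∀ i, A i) → ℝ} {a : ∀ i, A i} {B : Set (∀ i, A i)}
    {p : ℕ} {ω : ℕ → ∀ i, A i} (ha : a ∉ B) (h : (p, ω) ∈ ZPaths V a B) : 1 ≤ p := by
  rcases Nat.eq_zero_or_pos p with rfl | hp
  · exact absurd (h.2.1 ▸ h.2.2.1) ha
  · exact hp

lemma plll_step (U : Fin n → (∀ i, A i) → ℝ) {T : ℝ} (hT : 0 < T) (hn : 0 < n)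
    {a b : ∀ i, A i} {i : Fin n} (hnb : Neighbor a b i) (hV : VLLL U a b = 0) :
    GammaLLL U T ≤ PLLL U T a b := by
  have hne : a ≠ b := neighbor_ne hnb
  have hVv : VLLL U a b = bestVal U i a - U i b := by
    rw [VLLL, Finset.sum_eq_single_of_mem i (Finset.mem_univ i)
      (fun j _ hj => if_neg (not_not_intro (hnb.2 j hj))), if_pos hnb.1]
  have hUb : U i b = bestVal U i a := by rw [hVv] at hV; linarith
  have hSum : (∑ β : A i, Real.exp (U i (Function.update a i β) / T))
      = Zi U T i a * Real.exp (bestVal U i a / T) := by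
    rw [Zi, Finset.sum_mul]
    refine Finset.sum_congr rfl fun β _ => ?_
    rw [← Real.exp_add]
    congr 1
    field_simp
    ring
  have hZpos : 0 < Zi U T i a := lt_of_lt_of_le one_pos (one_le_Zi U hT i a)
  have hPv : PLLL U T a b = 1 / ((n : ℝ) * Zi U T i a) := by
    rw [PLLL, if_neg hne, PLLLoff, Finset.sum_eq_single_of_mem i (Finset.mem_univ i)
      (fun j _ hj => if_neg fun h => hj (neighbor_unique hnb h)), if_pos hnb,
      hUb, hSum]
    have he := Real.exp_pos (bestVal U i a / T)
    field_simp
  rw [hPv, GammaLLL]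
  have h1 : (0:ℝ) < (n : ℝ) * Zi U T i a := by positivity
  apply one_div_le_one_div_of_le h1
  exact mul_le_mul_of_nonneg_left (Zi_le_Zmax U T i a) (Nat.cast_nonneg n)

lemma pml_step (U : Fin n → (∀ i, A i) → ℝ) {T : ℝ} (hT : 0 < T) (hn : 0 < n)
    {a b : ∀ i, A i} {i : Fin n} (hnb : Neighbor a b i) :
    0 ≤ PML U T a b ∧ PML U T a b ≤ 1 / ((n : ℝ) * (mMin A : ℝ)) := by
  have hne : a ≠ b := neighbor_ne hnb
  rw [PML, if_neg hne, PMLoff, Finset.sum_eq_single_of_mem i (Finset.mem_univ i)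
    (fun j _ hj => if_neg fun h => hj (neighbor_unique hnb h)), if_pos hnb]
  constructor
  · positivity
  · have h1 : Real.exp (-(max (U i a - U i b) 0) / T) ≤ 1 := by
      rw [Real.exp_le_one_iff]
      apply div_nonpos_of_nonpos_of_nonneg _ hT.le
      simp [le_max_right]
    have h2 : (mMin A : ℝ) ≤ (Fintype.card (A i) : ℝ) := by
      exact_mod_cast mMin_le_card i
    have hm : (0:ℝ) < (mMin A : ℝ) := by exact_mod_cast (one_le_mMin hn).trans_lt' Nat.zero_lt_one
    have hnpos : (0:ℝ) < (n : ℝ) := by exact_mod_cast hn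
    calc (1 / ((n : ℝ) * (Fintype.card (A i) : ℝ))) * Real.exp (-(max (U i a - U i b) 0) / T)
        ≤ (1 / ((n : ℝ) * (Fintype.card (A i) : ℝ))) * 1 := by
          apply mul_le_mul_of_nonneg_left h1
          positivity
      _ = 1 / ((n : ℝ) * (Fintype.card (A i) : ℝ)) := mul_one _
      _ ≤ 1 / ((n : ℝ) * (mMin A : ℝ)) := by
          apply one_div_le_one_div_of_le (by positivity)
          exact mul_le_mul_of_nonneg_left h2 hnpos.le

/-- In a tie-free potential game with `M ⊊ 𝒜`, if
`m_min ≥ (1/n)·(1/Γ_T^LLL)^MPLR`, then for every non-Nash `a`, every zero-cost LLL path `ω`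
from `a` to `M` and every zero-cost ML path `ω′` from `a` to `M`:
`∏ P_T^LLL(ω) ≥ (Γ_T^LLL)^{ξ^LLL(a)} ≥ (1/(n·m_min))^{σ^ML(a)} ≥ ∏ P_T^ML(ω′)`. -/
theorem statement14 (hn : 0 < n)
    (U : Fin n → (∀ i, A i) → ℝ) (φ : (∀ i, A i) → ℝ) (hpot : IsPotential U φ)
    (htf : TieFree U) (hM : ∃ a : ∀ j, A j, ¬ IsNash U a)
    (T : ℝ) (hT : 0 < T)
    (hmin : (1 / (n : ℝ)) * (1 / GammaLLL U T) ^
        sSup {v : ℝ | ∃ a : ∀ j, A j, ¬ IsNash U a ∧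
          v = (maxLen (VLLL U) a {x | IsNash U x} : ℝ)
            / (minLen (VML U) a {x | IsNash U x} : ℝ)}
      ≤ (mMin A : ℝ)) :
    ∀ a : ∀ j, A j, ¬ IsNash U a →
      ∀ q ∈ ZPaths (VLLL U) a {x | IsNash U x},
        ∀ q' ∈ ZPaths (VML U) a {x | IsNash U x},
          GammaLLL U T ^ maxLen (VLLL U) a {x | IsNash U x}
              ≤ ∏ k ∈ Finset.range q.1, PLLL U T (q.2 k) (q.2 (k + 1))
          ∧ (1 / ((n : ℝ) * (mMin A : ℝ))) ^ minLen (VML U) a {x | IsNash U x}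
              ≤ GammaLLL U T ^ maxLen (VLLL U) a {x | IsNash U x}
          ∧ ∏ k ∈ Finset.range q'.1, PML U T (q'.2 k) (q'.2 (k + 1))
              ≤ (1 / ((n : ℝ) * (mMin A : ℝ))) ^ minLen (VML U) a {x | IsNash U x} := by
  have hnR : (0:ℝ) < (n:ℝ) := by exact_mod_cast hn
  have hnR1 : (1:ℝ) ≤ (n:ℝ) := by exact_mod_cast hn
  have hmR1 : (1:ℝ) ≤ (mMin A : ℝ) := by exact_mod_cast one_le_mMin (A := A) hn
  have hZ1 : (1:ℝ) ≤ Zmax U T := one_le_Zmax hn U hT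
  have hnZ : (1:ℝ) ≤ (n:ℝ) * Zmax U T := by nlinarith
  have hΓpos : 0 < GammaLLL U T := by
    rw [GammaLLL]; positivity
  have hΓ1 : GammaLLL U T ≤ 1 := by
    rw [GammaLLL, div_le_one (by linarith)]; exact hnZ
  have hbpos : (0:ℝ) < 1 / ((n : ℝ) * (mMin A : ℝ)) := by positivity
  have hb1 : 1 / ((n : ℝ) * (mMin A : ℝ)) ≤ 1 := by
    rw [div_le_one (by positivity)]; nlinarith
  intro a hna q hq q' hq'
  obtain ⟨p, ω⟩ := q
  obtain ⟨p', ω'⟩ := q'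
  have haM : a ∉ {x | IsNash U x} := hna
  -- bounds on lengths
  have hBddL : ∀ a' : ∀ j, A j, ∀ V : (∀ i, A i) → (∀ i, A i) → ℝ,
      BddAbove {p | ∃ ω, (p, ω) ∈ ZPaths V a' {x | IsNash U x}} := by
    intro a' V
    refine ⟨Fintype.card (∀ j, A j), ?_⟩
    rintro p ⟨ω, h⟩
    exact (zpath_len_lt h).le
  have hpξ : p ≤ maxLen (VLLL U) a {x | IsNash U x} :=
    le_csSup (hBddL a (VLLL U)) ⟨ω, hq⟩
  have hσle : minLen (VML U) a {x | IsNash U x} ≤ p' := Nat.sInf_le ⟨ω', hq'⟩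
  have hσ1 : 1 ≤ minLen (VML U) a {x | IsNash U x} := by
    have hne : {p | ∃ ω, (p, ω) ∈ ZPaths (VML U) a {x | IsNash U x}}.Nonempty :=
      ⟨p', ω', hq'⟩
    obtain ⟨ω'', h''⟩ := Nat.sInf_mem hne
    exact zpath_len_pos haM h''
  -- Part 1
  have part1 : GammaLLL U T ^ maxLen (VLLL U) a {x | IsNash U x}
      ≤ ∏ k ∈ Finset.range p, PLLL U T (ω k) (ω (k + 1)) := by
    calc GammaLLL U T ^ maxLen (VLLL U) a {x | IsNash U x}
        ≤ GammaLLL U T ^ p := pow_le_pow_of_le_one hΓpos.le hΓ1 hpξ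
      _ = ∏ _k ∈ Finset.range p, GammaLLL U T := by
          rw [Finset.prod_const, Finset.card_range]
      _ ≤ ∏ k ∈ Finset.range p, PLLL U T (ω k) (ω (k + 1)) := by
          refine Finset.prod_le_prod (fun _ _ => hΓpos.le) ?_
          intro k hk
          rw [Finset.mem_range] at hk
          obtain ⟨i, hnb⟩ := hq.1.2 k hk
          exact plll_step U hT hn hnb (hq.2.2.2 k hk)
  -- Part 3
  have part3 : ∏ k ∈ Finset.range p', PML U T (ω' k) (ω' (k + 1))
      ≤ (1 / ((n : ℝ) * (mMin A : ℝ))) ^ minLen (VML U) a {x | IsNash U x} := by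
    have hstep : ∀ k ∈ Finset.range p',
        0 ≤ PML U T (ω' k) (ω' (k + 1)) ∧
        PML U T (ω' k) (ω' (k + 1)) ≤ 1 / ((n : ℝ) * (mMin A : ℝ)) := by
      intro k hk
      rw [Finset.mem_range] at hk
      obtain ⟨i, hnb⟩ := hq'.1.2 k hk
      exact pml_step U hT hn hnb
    calc ∏ k ∈ Finset.range p', PML U T (ω' k) (ω' (k + 1))
        ≤ ∏ _k ∈ Finset.range p', 1 / ((n : ℝ) * (mMin A : ℝ)) :=
          Finset.prod_le_prod (fun k hk => (hstep k hk).1) (fun k hk => (hstep k hk).2)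
      _ = (1 / ((n : ℝ) * (mMin A : ℝ))) ^ p' := by
          rw [Finset.prod_const, Finset.card_range]
      _ ≤ (1 / ((n : ℝ) * (mMin A : ℝ))) ^ minLen (VML U) a {x | IsNash U x} :=
          pow_le_pow_of_le_one hbpos.le hb1 hσle
  -- Part 2
  have part2 : (1 / ((n : ℝ) * (mMin A : ℝ))) ^ minLen (VML U) a {x | IsNash U x}
      ≤ GammaLLL U T ^ maxLen (VLLL U) a {x | IsNash U x} := by
    set ξ := maxLen (VLLL U) a {x | IsNash U x} with hξdef
    set σ := minLen (VML U) a {x | IsNash U x} with hσdef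
    set MPLR := sSup {v : ℝ | ∃ a : ∀ j, A j, ¬ IsNash U a ∧
      v = (maxLen (VLLL U) a {x | IsNash U x} : ℝ)
        / (minLen (VML U) a {x | IsNash U x} : ℝ)} with hMdef
    have hSbdd : BddAbove {v : ℝ | ∃ a : ∀ j, A j, ¬ IsNash U a ∧
        v = (maxLen (VLLL U) a {x | IsNash U x} : ℝ)
          / (minLen (VML U) a {x | IsNash U x} : ℝ)} := by
      refine ⟨(Fintype.card (∀ j, A j) : ℝ), ?_⟩
      rintro v ⟨a', hna', rfl⟩
      have hξ'le : (maxLen (VLLL U) a' {x | IsNash U x} : ℝ)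
          ≤ (Fintype.card (∀ j, A j) : ℝ) := by
        by_cases hne' : {p | ∃ ω, (p, ω) ∈ ZPaths (VLLL U) a' {x | IsNash U x}}.Nonempty
        · obtain ⟨ω0, h0⟩ := Nat.sSup_mem hne' (hBddL a' (VLLL U))
          exact_mod_cast (zpath_len_lt h0).le
        · rw [Set.not_nonempty_iff_eq_empty] at hne'
          rw [maxLen, hne', csSup_empty]
          simp only [Nat.bot_eq_zero, Nat.cast_zero]
          positivity
      rcases Nat.eq_zero_or_pos (minLen (VML U) a' {x | IsNash U x}) with h0 | h0
      · rw [h0]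
        simp only [Nat.cast_zero, div_zero]
        positivity
      · have h1 : (1:ℝ) ≤ (minLen (VML U) a' {x | IsNash U x} : ℝ) := by exact_mod_cast h0
        exact le_trans (div_le_self (Nat.cast_nonneg _) h1) hξ'le
    have hmem : ((ξ : ℝ) / (σ : ℝ)) ≤ MPLR := le_csSup hSbdd ⟨a, hna, rfl⟩
    have hσposR : (0:ℝ) < (σ : ℝ) := by exact_mod_cast hσ1
    have hξMσ : (ξ : ℝ) ≤ MPLR * (σ : ℝ) := (div_le_iff₀ hσposR).mp hmem
    have hinvΓ : (1 / GammaLLL U T) = (n:ℝ) * Zmax U T := by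
      rw [GammaLLL, one_div_one_div]
    have hmono : (1 / GammaLLL U T) ^ MPLR ≤ (n:ℝ) * (mMin A : ℝ) := by
      calc (1 / GammaLLL U T) ^ MPLR
          = (n:ℝ) * ((1 / (n:ℝ)) * (1 / GammaLLL U T) ^ MPLR) := by
            field_simp
        _ ≤ (n:ℝ) * (mMin A : ℝ) := mul_le_mul_of_nonneg_left hmin hnR.le
    have hΓM : 0 < GammaLLL U T ^ MPLR := Real.rpow_pos_of_pos hΓpos _
    have hprod : (1 / GammaLLL U T) ^ MPLR * GammaLLL U T ^ MPLR = 1 := by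
      rw [← Real.mul_rpow (by positivity) hΓpos.le, one_div_mul_cancel hΓpos.ne',
        Real.one_rpow]
    have hbΓ : 1 / ((n : ℝ) * (mMin A : ℝ)) ≤ GammaLLL U T ^ MPLR := by
      rw [div_le_iff₀ (by positivity)]
      calc (1:ℝ) = (1 / GammaLLL U T) ^ MPLR * GammaLLL U T ^ MPLR := hprod.symm
        _ ≤ ((n:ℝ) * (mMin A : ℝ)) * GammaLLL U T ^ MPLR :=
            mul_le_mul_of_nonneg_right hmono hΓM.le
        _ = GammaLLL U T ^ MPLR * ((n:ℝ) * (mMin A : ℝ)) := mul_comm _ _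
    calc (1 / ((n : ℝ) * (mMin A : ℝ))) ^ σ
        = (1 / ((n : ℝ) * (mMin A : ℝ))) ^ (σ : ℝ) :=
          (Real.rpow_natCast _ σ).symm
      _ ≤ (GammaLLL U T ^ MPLR) ^ (σ : ℝ) :=
          Real.rpow_le_rpow hbpos.le hbΓ (Nat.cast_nonneg σ)
      _ = GammaLLL U T ^ (MPLR * (σ : ℝ)) := (Real.rpow_mul hΓpos.le _ _).symm
      _ ≤ GammaLLL U T ^ ((ξ : ℕ) : ℝ) :=
          Real.rpow_le_rpow_of_exponent_ge hΓpos hΓ1 hξMσ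
      _ = GammaLLL U T ^ ξ := Real.rpow_natCast _ ξ
  exact ⟨part1, part2, part3⟩

end Defs
end

section
/- Let D be a nonempty proper subset of 𝒜. For l ∈ {ML, LLL} define the exit height H_e^l(D) := min_{x∈D} max_{y∈𝒜∖D} (φ(x) − A_c^l(x, y)). Then H_e^LLL(D) ≥ H_e^ML(D); i.e., the exit height of any subset of the joint action space under log-linear learning is at least its exit height under Metropolis learning. -/
open Finset Real Filter Topology

variable {n : ℕ} {A : Fin n → Type*}

section Defs
variable [∀ i, Fintype (A i)] [∀ i, DecidableEq (A i)] [∀ i, Nonempty (A i)]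

lemma neighbor_update {a b : ∀ i, A i} {i : Fin n} (h : Neighbor a b i) :
    b = Function.update a i (b i) := by
  funext j
  by_cases hj : j = i
  · subst hj; simp
  · rw [Function.update_of_ne hj]; exact (h.2 j hj).symm

lemma vml_nonneg (U : Fin n → (∀ i, A i) → ℝ) (a b : ∀ i, A i) : 0 ≤ VML U a b := by
  apply Finset.sum_nonneg
  intro i _
  split
  · exact le_max_right _ _
  · exact le_refl 0

lemma vml_le_vlll (U : Fin n → (∀ i, A i) → ℝ) {a b : ∀ i, A i}
    (h : ∃ i, Neighbor a b i) : VML U a b ≤ VLLL U a b := by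
  obtain ⟨i, hi⟩ := h
  apply Finset.sum_le_sum
  intro j _
  by_cases hj : a j ≠ b j
  · simp only [if_pos hj]
    have hji : j = i := by
      by_contra hne
      exact hj (hi.2 j hne)
    subst hji
    have hb : b = Function.update a j (b j) := neighbor_update hi
    have h1 : U j a ≤ bestVal U j a := by
      have h' := Finset.le_sup' (fun β : A j => U j (Function.update a j β))
        (Finset.mem_univ (a j))
      simpa only [bestVal, Function.update_eq_self] using h'
    have h2 : U j b ≤ bestVal U j a := by
      conv_lhs => rw [hb]
      exact Finset.le_sup' (fun β : A j => U j (Function.update a j β))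
        (Finset.mem_univ (b j))
    exact max_le (by linarith) (by linarith)
  · simp [hj]

lemma real_sSup_le_sSup {S1 S2 : Set ℝ} (hbdd : BddAbove S2)
    (h12 : ∀ v ∈ S1, ∃ w ∈ S2, v ≤ w) (h21 : ∀ w ∈ S2, ∃ v, v ∈ S1) :
    sSup S1 ≤ sSup S2 := by
  rcases S1.eq_empty_or_nonempty with h | h
  · have h2 : S2 = ∅ := Set.eq_empty_iff_forall_notMem.2 fun w hw => by
      obtain ⟨v, hv⟩ := h21 w hw
      rw [h] at hv
      exact hv
    simp [h, h2]
  · exact csSup_le h fun v hv =>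
      let ⟨w, hw, hvw⟩ := h12 v hv
      hvw.trans (le_csSup hbdd hw)

lemma ac_lll_le_ac_ml (U : Fin n → (∀ i, A i) → ℝ) (φ : (∀ i, A i) → ℝ)
    (x y : ∀ i, A i) : Ac (VLLL U) φ x y ≤ Ac (VML U) φ x y := by
  unfold Ac
  apply real_sSup_le_sSup
  · refine ⟨φ x, ?_⟩
    rintro w ⟨p, ω, hp, hpath, h0, hpy, rfl⟩
    have hbb : BddBelow (Set.range fun k : Fin p =>
        φ (ω k) - VML U (ω k) (ω (k + 1))) := (Set.finite_range _).bddBelow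
    have h1 : (⨅ k : Fin p, (φ (ω k) - VML U (ω k) (ω (k + 1))))
        ≤ φ (ω 0) - VML U (ω 0) (ω 1) := by
      have := ciInf_le hbb (⟨0, hp⟩ : Fin p)
      simpa using this
    have h2 : 0 ≤ VML U (ω 0) (ω 1) := vml_nonneg U (ω 0) (ω 1)
    rw [← h0]
    linarith
  · rintro v ⟨p, ω, hp, hpath, h0, hpy, rfl⟩
    refine ⟨⨅ k : Fin p, (φ (ω k) - VML U (ω k) (ω (k + 1))),
      ⟨p, ω, hp, hpath, h0, hpy, rfl⟩, ?_⟩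
    apply ciInf_mono ((Set.finite_range _).bddBelow)
    intro k
    have hn : ∃ i, Neighbor (ω k) (ω (k + 1)) i := hpath.2 k k.isLt
    linarith [vml_le_vlll U hn]
  · rintro w ⟨p, ω, hp, hpath, h0, hpy, rfl⟩
    exact ⟨_, p, ω, hp, hpath, h0, hpy, rfl⟩

/-- For every nonempty proper subset `D` of the joint action space,
`H_e^LLL(D) ≥ H_e^ML(D)`, where `H_e^l(D) = min_{x∈D} max_{y∉D} (φ(x) − A_c^l(x,y))`. -/
theorem statement17
    (U : Fin n → (∀ i, A i) → ℝ) (φ : (∀ i, A i) → ℝ) (hpot : IsPotential U φ)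
    (D : Finset (∀ j, A j)) (hD : D.Nonempty) (hDc : (Finset.univ \ D).Nonempty) :
    D.inf' hD (fun x => (Finset.univ \ D).sup' hDc fun y => φ x - Ac (VML U) φ x y)
      ≤ D.inf' hD (fun x => (Finset.univ \ D).sup' hDc fun y => φ x - Ac (VLLL U) φ x y) := by
  apply Finset.le_inf'
  intro x hx
  refine le_trans (Finset.inf'_le _ hx) ?_
  apply Finset.sup'_le
  intro y hy
  refine le_trans ?_ (Finset.le_sup' _ hy)
  linarith [ac_lll_le_ac_ml U φ x y]

end Defs
end
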